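/- More precisely, as p → ∞, (M/L) ∑_{m=1}^M log₂(1 + L λ_m s_m★(p)) − (M²/L)[log₂ p + (1/M) ∑_{m=1}^M log₂(L λ_m / M)] → 0. -/

import Mathlib

open Filter Topology

/-- Refined high-SNR expansion of the water-filling sensing rate:
`(M/L) ∑ log₂(1 + L λ_m s_m★(p)) − (M²/L)[log₂ p + (1/M) ∑ log₂(L λ_m / M)] → 0`. -/
theorem stmt_4 (M : ℕ) (hM : 0 < M) (L : ℝ) (hL : 0 < L)
    (lam : Fin M → ℝ) (hlam : ∀ m, 0 < lam m)
    (s : ℝ → Fin M → ℝ)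
    (hs : ∀ p > (0 : ℝ), ∃ ν > (0 : ℝ),
      (∀ m, s p m = max 0 (1 / ν - 1 / (L * lam m))) ∧ ∑ m, s p m = p) :
    Tendsto
      (fun p : ℝ =>
        (M : ℝ) / L * ∑ m, Real.logb 2 (1 + L * lam m * s p m)
          - (M : ℝ) ^ 2 / L *
            (Real.logb 2 p + (1 / (M : ℝ)) * ∑ m, Real.logb 2 (L * lam m / M)))
      atTop (𝓝 0) := by
  have hMpos : (0:ℝ) < M := Nat.cast_pos.mpr hM
  set C : ℝ := ∑ k, 1 / (L * lam k) with hCdef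
  have hCpos : 0 < C :=
    Finset.sum_pos (fun k _ => by have := hlam k; positivity) ⟨⟨0, hM⟩, Finset.mem_univ _⟩
  -- the target limit function
  have hlim : Tendsto (fun p : ℝ => (M:ℝ)^2 / L * Real.logb 2 ((p + C)/p)) atTop (𝓝 0) := by
    have h1 : Tendsto (fun p : ℝ => (p + C)/p) atTop (𝓝 1) := by
      have : Tendsto (fun p : ℝ => 1 + C * p⁻¹) atTop (𝓝 (1 + C * 0)) :=
        tendsto_const_nhds.add (tendsto_const_nhds.mul tendsto_inv_atTop_zero)
      simp only [mul_zero, add_zero] at this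
      refine this.congr' ?_
      filter_upwards [eventually_gt_atTop (0:ℝ)] with p hp
      field_simp
    have h2 : Tendsto (fun x : ℝ => Real.logb 2 x) (𝓝 1) (𝓝 0) := by
      have : ContinuousAt (fun x : ℝ => Real.logb 2 x) 1 := by
        unfold Real.logb
        exact (Real.continuousAt_log one_ne_zero).div_const _
      simpa [Real.logb] using this.tendsto
    have := (h2.comp h1).const_mul ((M:ℝ)^2 / L)
    simpa using this
  refine hlim.congr' ?_
  filter_upwards [eventually_gt_atTop (max 0 ((M:ℝ) * C))] with p hp
  have hp0 : (0:ℝ) < p := lt_of_le_of_lt (le_max_left _ _) hp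
  have hpMC : (M:ℝ) * C < p := lt_of_le_of_lt (le_max_right _ _) hp
  obtain ⟨ν, hν, hform, hsum⟩ := hs p hp0
  -- all constraints active
  have hall : ∀ m : Fin M, 1 / (L * lam m) ≤ 1 / ν := by
    by_contra h
    push_neg at h
    obtain ⟨m0, hm0⟩ := h
    have hbound : ∀ k : Fin M, s p k ≤ C := by
      intro k
      rw [hform k]
      have h1 : 1 / (L * lam m0) ≤ C :=
        Finset.single_le_sum (f := fun k => 1 / (L * lam k))
          (fun k _ => by have := hlam k; positivity) (Finset.mem_univ m0)
      have : 1 / ν - 1 / (L * lam k) ≤ C := by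
        have : 1 / ν ≤ C := le_trans hm0.le h1
        have hpos : 0 < 1 / (L * lam k) := by have := hlam k; positivity
        linarith
      exact max_le hCpos.le this
    have : p ≤ (M:ℝ) * C := by
      calc p = ∑ k, s p k := hsum.symm
        _ ≤ ∑ _k : Fin M, C := Finset.sum_le_sum (fun k _ => hbound k)
        _ = (M:ℝ) * C := by simp [mul_comm]
    linarith
  have hsval : ∀ m, s p m = 1 / ν - 1 / (L * lam m) := by
    intro m
    rw [hform m, max_eq_right (by linarith [hall m])]
  -- solve for 1/ν
  have hinv : 1 / ν = (p + C) / M := by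
    have : p = (M:ℝ) * (1/ν) - C := by
      rw [← hsum]
      simp only [hsval]
      rw [Finset.sum_sub_distrib, ← hCdef]
      simp [mul_comm]
    field_simp at this ⊢
    linarith
  have hpC : 0 < p + C := by linarith
  have hterm : ∀ m, 1 + L * lam m * s p m = (L * lam m / M) * (p + C) := by
    intro m
    rw [hsval m, hinv]
    have hLl : L * lam m ≠ 0 := by have := hlam m; positivity
    field_simp
    rw [mul_sub, mul_div_assoc', mul_div_cancel_left₀ _ (hlam m).ne']
    ring
  have hlog : ∀ m, Real.logb 2 (1 + L * lam m * s p m)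
      = Real.logb 2 (L * lam m / M) + Real.logb 2 (p + C) := by
    intro m
    rw [hterm m, Real.logb_mul (by have := hlam m; positivity) (ne_of_gt hpC)]
  simp only [hlog, Finset.sum_add_distrib, Finset.sum_const, Finset.card_univ,
    Fintype.card_fin, nsmul_eq_mul]
  rw [Real.logb_div (ne_of_gt hpC) (ne_of_gt hp0)]
  have hM0 : (M:ℝ) ≠ 0 := ne_of_gt hMpos
  field_simp
  ring
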